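/- (Minty's trick.) Let H : ℝ → ℝ be continuous and nondecreasing, let (X, μ) be a measure space with finite measure, let p > 1, and let (u_n)_{n ∈ ℕ} ⊂ L^p(X) and u ∈ L^p(X) be such that: (1) u_n converges weakly to u in L^p(X) (i.e. ∫_X u_n g dμ → ∫_X u g dμ for every g ∈ L^{p'}(X), where p' = p/(p−1)); (2) H(u_n) ∈ L¹(X) for every n, and there exists w ∈ L¹(X) such that H(u_n) → w strongly in L¹(X). Then w = H(u) almost everywhere on X. -/

import Mathlib

open MeasureTheory Filter Topology
open scoped ENNReal

private lemma minty_key {X : Type*} [MeasurableSpace X] (μ : Measure X) [IsFiniteMeasure μ]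
    (H : ℝ → ℝ) (hHmono : Monotone H)
    (u : ℕ → X → ℝ) (ulim w : X → ℝ)
    (hulimm : StronglyMeasurable ulim) (hwm : StronglyMeasurable w)
    (hum : ∀ n, StronglyMeasurable (u n))
    (huint : ∀ n, Integrable (u n) μ)
    (hHu : ∀ n, Integrable (fun x => H (u n x)) μ)
    (hw : Integrable w μ) (hulimint : Integrable ulim μ)
    (C r : ℝ) (hr : 0 < r)
    (hC : ∀ n, ∀ A : Set X, MeasurableSet A → |∫ x in A, u n x ∂μ| ≤ C * (μ A).toReal ^ r)
    (hweak : ∀ A : Set X, MeasurableSet A →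
      Tendsto (fun n => ∫ x in A, u n x ∂μ) atTop (𝓝 (∫ x in A, ulim x ∂μ)))
    (hstrong : Tendsto (fun n => ∫ x, |H (u n x) - w x| ∂μ) atTop (𝓝 0))
    (q : ℝ) :
    ∀ᵐ x ∂μ, H q < w x → q ≤ ulim x := by
  have hS : ∀ k : ℕ,
      μ {x | H q + 1/(k+1) ≤ w x ∧ ulim x ≤ q - 1/(k+1)} = 0 := by
    intro k
    set ε : ℝ := 1/(k+1) with hεdef
    have hε : (0:ℝ) < ε := by positivity
    by_contra hm
    set A := {x | H q + ε ≤ w x ∧ ulim x ≤ q - ε} with hAdef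
    have hA : MeasurableSet A :=
      (measurableSet_le measurable_const hwm.measurable).inter
        (measurableSet_le hulimm.measurable measurable_const)
    have hAfin : μ A ≠ ∞ := measure_ne_top μ A
    have hm' : 0 < (μ A).toReal := ENNReal.toReal_pos hm hAfin
    set m := (μ A).toReal with hmdef
    -- upper bound for the limit
    have hupper : ∫ x in A, ulim x ∂μ ≤ (q - ε) * m := by
      have h1 : ∫ x in A, ulim x ∂μ ≤ ∫ _x in A, (q - ε) ∂μ :=
        setIntegral_mono_on hulimint.integrableOn
          (integrableOn_const (measure_ne_top μ A)) hA (fun x hx => hx.2)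
      rw [setIntegral_const, smul_eq_mul, mul_comm] at h1
      exact h1
    set N : ℕ → Set X := fun n => A ∩ {x | u n x ≤ q} with hNdef
    have hNmeas : ∀ n, MeasurableSet (N n) := fun n =>
      hA.inter (measurableSet_le (hum n).measurable measurable_const)
    have hNsub : ∀ n, N n ⊆ A := fun n => Set.inter_subset_left
    have hNfin : ∀ n, μ (N n) ≠ ∞ := fun n => measure_ne_top μ _
    have habs : ∀ n, Integrable (fun x => |H (u n x) - w x|) μ := fun n =>
      ((hHu n).sub hw).abs
    have hNb : ∀ n, (μ (N n)).toReal ≤ (∫ x, |H (u n x) - w x| ∂μ) / ε := by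
      intro n
      rw [le_div_iff₀ hε]
      have h1 : ε * (μ (N n)).toReal ≤ ∫ x in N n, |H (u n x) - w x| ∂μ := by
        refine setIntegral_ge_of_const_le_real (hNmeas n) (hNfin n) (fun x hx => ?_)
          ((habs n).integrableOn)
        have h2 : H (u n x) ≤ H q := hHmono hx.2
        have h3 : H q + ε ≤ w x := hx.1.1
        calc ε ≤ w x - H (u n x) := by linarith
          _ ≤ |H (u n x) - w x| := by rw [abs_sub_comm]; exact le_abs_self _
      have h4 : ∫ x in N n, |H (u n x) - w x| ∂μ ≤ ∫ x, |H (u n x) - w x| ∂μ :=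
        setIntegral_le_integral (habs n) (Eventually.of_forall fun x => abs_nonneg _)
      calc (μ (N n)).toReal * ε = ε * (μ (N n)).toReal := by ring
        _ ≤ _ := h1.trans h4
    have hN0 : Tendsto (fun n => (μ (N n)).toReal) atTop (𝓝 0) := by
      refine squeeze_zero (fun n => ENNReal.toReal_nonneg) hNb ?_
      simpa using hstrong.div_const ε
    have hsplit : ∀ n, ∫ x in A, u n x ∂μ
        = (∫ x in A \ N n, u n x ∂μ) + ∫ x in N n, u n x ∂μ := by
      intro n
      rw [← setIntegral_union disjoint_sdiff_self_left (hNmeas n)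
        ((huint n).integrableOn) ((huint n).integrableOn),
        Set.diff_union_of_subset (hNsub n)]
    have hmes : ∀ n, (μ (A \ N n)).toReal = m - (μ (N n)).toReal := by
      intro n
      rw [measure_diff (hNsub n) (hNmeas n).nullMeasurableSet (hNfin n),
        ENNReal.toReal_sub_of_le (measure_mono (hNsub n)) hAfin]
    have hlow : ∀ n, q * (m - (μ (N n)).toReal) - C * (μ (N n)).toReal ^ r
        ≤ ∫ x in A, u n x ∂μ := by
      intro n
      have h1 : q * (m - (μ (N n)).toReal) ≤ ∫ x in A \ N n, u n x ∂μ := by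
        rw [← hmes n]
        refine setIntegral_ge_of_const_le_real (hA.diff (hNmeas n)) (measure_ne_top μ _)
          (fun x hx => ?_) ((huint n).integrableOn)
        have h5 : ¬ (x ∈ A ∧ u n x ≤ q) := hx.2
        have h6 : q ≤ u n x := by
          by_contra h7
          exact h5 ⟨hx.1, (not_lt.mp (fun h8 => h7 (le_of_lt h8)) : u n x ≤ q)⟩
        linarith
      have h2 : -(C * (μ (N n)).toReal ^ r) ≤ ∫ x in N n, u n x ∂μ :=
        neg_le_of_abs_le (hC n (N n) (hNmeas n))
      rw [hsplit n]; linarith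
    have hBlim : Tendsto
        (fun n => q * (m - (μ (N n)).toReal) - C * (μ (N n)).toReal ^ r)
        atTop (𝓝 (q * m)) := by
      have h1 : Tendsto (fun n => (μ (N n)).toReal ^ r) atTop (𝓝 0) := by
        have h2 := (Real.continuousAt_rpow_const 0 r (Or.inr hr.le)).tendsto.comp hN0
        simpa [Function.comp_def, Real.zero_rpow hr.ne'] using h2
      have h3 : Tendsto (fun n => q * (m - (μ (N n)).toReal) - C * (μ (N n)).toReal ^ r)
          atTop (𝓝 (q * (m - 0) - C * 0)) :=
        (((tendsto_const_nhds : Tendsto (fun _ : ℕ => m) atTop (𝓝 m)).sub hN0).const_mul q).sub (h1.const_mul C)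
      simpa using h3
    have hfin : q * m ≤ ∫ x in A, ulim x ∂μ :=
      le_of_tendsto_of_tendsto' hBlim (hweak A hA) hlow
    nlinarith
  have hnull : μ {x | H q < w x ∧ ulim x < q} = 0 := by
    refine measure_mono_null ?_ (measure_iUnion_null hS)
    intro x hx
    obtain ⟨k, hk⟩ := exists_nat_one_div_lt
      (lt_min_iff.2 ⟨sub_pos.2 hx.1, sub_pos.2 hx.2⟩ : (0:ℝ) < min (w x - H q) (q - ulim x))
    rw [lt_min_iff] at hk
    exact Set.mem_iUnion.2 ⟨k, ⟨by push_cast; linarith [hk.1], by push_cast; linarith [hk.2]⟩⟩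
  rw [ae_iff]
  refine measure_mono_null ?_ hnull
  intro x hx
  simp only [Set.mem_setOf_eq, Classical.not_imp, not_le] at hx
  exact hx

/-- Minty's trick: if `H` is continuous nondecreasing, `uₙ → u` weakly in `L^p(X)` (`p > 1`,
finite measure), `H(uₙ) ∈ L¹` and `H(uₙ) → w` strongly in `L¹(X)`, then `w = H(u)` a.e. -/
theorem stmt8 {X : Type*} [MeasurableSpace X] (μ : Measure X) [IsFiniteMeasure μ]
    (H : ℝ → ℝ) (hHcont : Continuous H) (hHmono : Monotone H)
    (p : ℝ) (hp : 1 < p)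
    (u : ℕ → X → ℝ) (ulim : X → ℝ)
    (hu : ∀ n, MemLp (u n) (ENNReal.ofReal p) μ)
    (hulim : MemLp ulim (ENNReal.ofReal p) μ)
    (hweak : ∀ g : X → ℝ, MemLp g (ENNReal.ofReal (p / (p - 1))) μ →
      Tendsto (fun n => ∫ x, u n x * g x ∂μ) atTop (𝓝 (∫ x, ulim x * g x ∂μ)))
    (hHu : ∀ n, Integrable (fun x => H (u n x)) μ)
    (w : X → ℝ) (hw : Integrable w μ)
    (hstrong : Tendsto (fun n => ∫ x, |H (u n x) - w x| ∂μ) atTop (𝓝 0)) :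
    w =ᵐ[μ] fun x => H (ulim x) := by
  set P : ℝ≥0∞ := ENNReal.ofReal p with hPdef
  set Q : ℝ≥0∞ := ENNReal.ofReal (p / (p - 1)) with hQdef
  have hp0 : p ≠ 0 := by linarith
  have hp1 : p - 1 ≠ 0 := by intro h; rw [sub_eq_zero] at h; exact absurd h.symm hp.ne
  have hpq : p.HolderConjugate (p / (p - 1)) := Real.HolderConjugate.conjExponent hp
  have hp'pos : 0 < p / (p - 1) := hpq.symm.pos
  have hQ0 : Q ≠ 0 := by
    rw [hQdef]; simp only [ne_eq, ENNReal.ofReal_eq_zero, not_le]; exact hp'pos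
  have hQtop : Q ≠ ∞ := ENNReal.ofReal_ne_top
  have hQtoReal : Q.toReal = p / (p - 1) := ENNReal.toReal_ofReal hp'pos.le
  haveI : Fact (1 ≤ Q) := ⟨by rw [hQdef]; exact ENNReal.one_le_ofReal.2 hpq.symm.lt.le⟩
  have hP1 : (1 : ℝ≥0∞) ≤ P := by rw [hPdef]; exact ENNReal.one_le_ofReal.2 hp.le
  have honeP : (1 : ℝ≥0∞) / 1 = 1 / P + 1 / Q := by
    simp only [one_div, inv_one]
    rw [hPdef, hQdef]
    exact hpq.inv_add_inv_ennreal.symm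
  -- measurable representatives
  set u' : ℕ → X → ℝ := fun n => (hu n).1.mk (u n) with hu'def
  have hmU : ∀ n, StronglyMeasurable (u' n) := fun n => (hu n).1.stronglyMeasurable_mk
  have haeU : ∀ n, u n =ᵐ[μ] u' n := fun n => (hu n).1.ae_eq_mk
  set ulim' : X → ℝ := hulim.1.mk ulim with hulim'def
  have hmUl : StronglyMeasurable ulim' := hulim.1.stronglyMeasurable_mk
  have haeUl : ulim =ᵐ[μ] ulim' := hulim.1.ae_eq_mk
  set w' : X → ℝ := hw.1.mk w with hw'def
  have hmW : StronglyMeasurable w' := hw.1.stronglyMeasurable_mk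
  have haeW : w =ᵐ[μ] w' := hw.1.ae_eq_mk
  have hu' : ∀ n, MemLp (u' n) P μ := fun n => (hu n).ae_eq (haeU n)
  have hulim' : MemLp ulim' P μ := hulim.ae_eq haeUl
  have huint : ∀ n, Integrable (u' n) μ := fun n => (hu' n).integrable hP1
  have hulim'int : Integrable ulim' μ := hulim'.integrable hP1
  have hw' : Integrable w' μ := hw.congr haeW
  have hHu' : ∀ n, Integrable (fun x => H (u' n x)) μ := fun n =>
    (hHu n).congr ((haeU n).mono fun x hx => by dsimp only; rw [hx])
  have hstrong' : Tendsto (fun n => ∫ x, |H (u' n x) - w' x| ∂μ) atTop (𝓝 0) := by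
    refine hstrong.congr fun n => integral_congr_ae ?_
    filter_upwards [haeU n, haeW] with x h1 h2
    rw [h1, h2]
  -- the pairing functionals on Lᑫ
  have hmul : ∀ n (g : Lp ℝ Q μ), Integrable (fun x => u' n x * g x) μ := by
    intro n g
    have h1 : MemLp ((u' n) • (⇑g : X → ℝ)) 1 μ := (Lp.memLp g).smul (hu' n) (hpqr := ⟨by simpa [one_div] using honeP.symm⟩)
    exact memLp_one_iff_integrable.1 h1
  set T : ℕ → Lp ℝ Q μ →L[ℝ] ℝ := fun n =>
    LinearMap.mkContinuous
      { toFun := fun g => ∫ x, u' n x * g x ∂μ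
        map_add' := fun g₁ g₂ => by
          have h1 : (⇑(g₁ + g₂) : X → ℝ) =ᵐ[μ] ⇑g₁ + ⇑g₂ := Lp.coeFn_add g₁ g₂
          calc ∫ x, u' n x * (g₁ + g₂ : Lp ℝ Q μ) x ∂μ
              = ∫ x, (u' n x * g₁ x + u' n x * g₂ x) ∂μ :=
                integral_congr_ae (h1.mono fun x hx => by
                  simp only [Pi.add_apply] at hx; dsimp only; rw [hx]; ring)
            _ = _ := integral_add (hmul n g₁) (hmul n g₂)
        map_smul' := fun c g => by
          have h1 : (⇑(c • g) : X → ℝ) =ᵐ[μ] c • ⇑g := Lp.coeFn_smul c g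
          simp only [RingHom.id_apply, smul_eq_mul]
          calc ∫ x, u' n x * (c • g : Lp ℝ Q μ) x ∂μ
              = ∫ x, c * (u' n x * g x) ∂μ :=
                integral_congr_ae (h1.mono fun x hx => by
                  simp only [Pi.smul_apply, smul_eq_mul] at hx; dsimp only; rw [hx]; ring)
            _ = c * ∫ x, u' n x * g x ∂μ := integral_const_mul c _ }
      ((eLpNorm (u' n) P μ).toReal) (fun g => by
        have hint := hmul n g
        have h0 : ‖∫ x, u' n x * (⇑g : X → ℝ) x ∂μ‖ ≤ ∫ x, ‖u' n x * g x‖ ∂μ :=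
          norm_integral_le_integral_norm _
        have h1 : ∫ x, ‖u' n x * g x‖ ∂μ = (eLpNorm (fun x => u' n x * g x) 1 μ).toReal := by
          rw [integral_norm_eq_lintegral_enorm hint.1, eLpNorm_one_eq_lintegral_enorm]
        have h2 : eLpNorm ((u' n) • (⇑g : X → ℝ)) 1 μ ≤ eLpNorm (u' n) P μ * eLpNorm (⇑g) Q μ :=
          eLpNorm_smul_le_mul_eLpNorm (Lp.aestronglyMeasurable g)
            (hmU n).aestronglyMeasurable (hpqr := ⟨by simpa [one_div] using honeP.symm⟩)
        have h3 : (eLpNorm (fun x => u' n x * g x) 1 μ).toReal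
            ≤ (eLpNorm (u' n) P μ).toReal * (eLpNorm (⇑g) Q μ).toReal := by
          rw [← ENNReal.toReal_mul]
          exact ENNReal.toReal_mono
            (ENNReal.mul_ne_top (hu' n).eLpNorm_ne_top (Lp.memLp g).eLpNorm_ne_top) h2
        rw [Lp.norm_def]
        calc ‖∫ x, u' n x * g x ∂μ‖ ≤ _ := h0
          _ = _ := h1
          _ ≤ _ := h3) with hTdef
  have hTapp : ∀ n g, T n g = ∫ x, u' n x * g x ∂μ := fun n g => rfl
  have hptwise : ∀ g : Lp ℝ Q μ, ∃ c : ℝ, ∀ n, ‖T n g‖ ≤ c := by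
    intro g
    have h1 : Tendsto (fun n => ∫ x, u n x * g x ∂μ) atTop (𝓝 (∫ x, ulim x * g x ∂μ)) :=
      hweak _ (Lp.memLp g)
    have h2 : ∀ n, ∫ x, u n x * g x ∂μ = T n g := fun n =>
      integral_congr_ae ((haeU n).mono fun x hx => by dsimp only; rw [hx])
    have h3 : Tendsto (fun n => ‖T n g‖) atTop (𝓝 ‖∫ x, ulim x * g x ∂μ‖) :=
      (h1.congr h2).norm
    obtain ⟨c, hc⟩ := h3.bddAbove_range
    exact ⟨c, fun n => hc (Set.mem_range_self n)⟩
  obtain ⟨C, hCb⟩ := banach_steinhaus hptwise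
  set r : ℝ := 1 / Q.toReal with hrdef
  have hr : 0 < r := by rw [hrdef, hQtoReal]; positivity
  have hCkey : ∀ n, ∀ A : Set X, MeasurableSet A →
      |∫ x in A, u' n x ∂μ| ≤ C * (μ A).toReal ^ r := by
    intro n A hA
    set g : Lp ℝ Q μ := indicatorConstLp Q hA (measure_ne_top μ A) (1 : ℝ) with hgdef
    have hgfn : ⇑g =ᵐ[μ] A.indicator (fun _ => (1 : ℝ)) := indicatorConstLp_coeFn
    have h1 : T n g = ∫ x in A, u' n x ∂μ := by
      have h2 : (fun x => u' n x * g x) =ᵐ[μ] A.indicator (fun x => u' n x) := by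
        filter_upwards [hgfn] with x hx
        rw [hx]
        by_cases hxA : x ∈ A <;>
          simp [Set.indicator_of_mem, Set.indicator_of_notMem, hxA]
      rw [hTapp n g, integral_congr_ae h2, integral_indicator hA]
    have h3 : ‖T n g‖ ≤ C * ‖g‖ :=
      le_trans ((T n).le_opNorm g) (mul_le_mul_of_nonneg_right (hCb n) (norm_nonneg g))
    rw [h1, Real.norm_eq_abs] at h3
    rw [norm_indicatorConstLp hQ0 hQtop] at h3
    simpa [Real.norm_eq_abs, abs_one, hrdef, Measure.real] using h3
  have hweak' : ∀ A : Set X, MeasurableSet A →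
      Tendsto (fun n => ∫ x in A, u' n x ∂μ) atTop (𝓝 (∫ x in A, ulim' x ∂μ)) := by
    intro A hA
    have hg : MemLp (A.indicator fun _ => (1 : ℝ)) Q μ :=
      memLp_indicator_const Q hA 1 (Or.inr (measure_ne_top μ A))
    have h1 := hweak _ hg
    have e : ∀ v : X → ℝ,
        (fun x => v x * A.indicator (fun _ => (1 : ℝ)) x) = A.indicator v := by
      intro v; funext x; by_cases hxA : x ∈ A <;> simp [hxA]
    have h2 : ∀ n, ∫ x, u n x * A.indicator (fun _ => (1 : ℝ)) x ∂μ
        = ∫ x in A, u' n x ∂μ := by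
      intro n
      rw [e (u n), integral_indicator hA]
      exact integral_congr_ae (ae_restrict_of_ae (haeU n))
    have h3 : ∫ x, ulim x * A.indicator (fun _ => (1 : ℝ)) x ∂μ = ∫ x in A, ulim' x ∂μ := by
      rw [e ulim, integral_indicator hA]
      exact integral_congr_ae (ae_restrict_of_ae haeUl)
    rw [h3] at h1
    exact h1.congr h2
  -- the two one-sided claims
  have claim1 : ∀ q : ℚ, ∀ᵐ x ∂μ, H q < w' x → (q : ℝ) ≤ ulim' x := fun q =>
    minty_key μ H hHmono u' ulim' w' hmUl hmW hmU huint hHu' hw' hulim'int C r hr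
      hCkey hweak' hstrong' q
  have claim2 : ∀ q : ℚ, ∀ᵐ x ∂μ, w' x < H q → ulim' x ≤ (q : ℝ) := by
    intro q
    have h := minty_key μ (fun s => -H (-s))
      (fun a b hab => neg_le_neg (hHmono (neg_le_neg hab)))
      (fun n x => -u' n x) (fun x => -ulim' x) (fun x => -w' x)
      hmUl.neg hmW.neg (fun n => (hmU n).neg)
      (fun n => (huint n).neg) (fun n => by simpa only [neg_neg, Pi.neg_def] using (hHu' n).neg) hw'.neg hulim'int.neg
      C r hr
      (fun n A hA => by
        rw [integral_neg, abs_neg]; exact hCkey n A hA)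
      (fun A hA => by
        simp only [integral_neg]; exact (hweak' A hA).neg)
      (hstrong'.congr fun n => integral_congr_ae (Filter.Eventually.of_forall fun x => by
        dsimp only; rw [neg_neg, neg_sub_neg, abs_sub_comm]))
      (-(q : ℝ))
    filter_upwards [h] with x hx h2
    have h4 : -H (-(-(q : ℝ))) < -w' x := by rw [neg_neg]; linarith
    have h5 := hx h4
    linarith
  have hae : ∀ᵐ x ∂μ, (∀ q : ℚ, H q < w' x → (q : ℝ) ≤ ulim' x)
      ∧ (∀ q : ℚ, w' x < H q → ulim' x ≤ (q : ℝ)) :=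
    (ae_all_iff.2 claim1).and (ae_all_iff.2 claim2)
  have hmain : ∀ᵐ x ∂μ, w' x = H (ulim' x) := by
    filter_upwards [hae] with x hx
    by_contra hne
    rcases lt_or_gt_of_ne hne with hlt | hgt
    · -- w' x < H (ulim' x)
      have hev : ∀ᶠ s in 𝓝 (ulim' x), w' x < H s :=
        hHcont.continuousAt (lt_mem_nhds hlt)
      obtain ⟨δ, hδ, hball⟩ := Metric.eventually_nhds_iff.1 hev
      obtain ⟨q, hq1, hq2⟩ := exists_rat_btwn (sub_lt_self (ulim' x) hδ)
      have hdist : dist (q : ℝ) (ulim' x) < δ := by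
        rw [Real.dist_eq, abs_lt]; constructor <;> linarith
      have h6 : w' x < H q := hball hdist
      have h7 := hx.2 q h6
      linarith
    · -- H (ulim' x) < w' x
      have hev : ∀ᶠ s in 𝓝 (ulim' x), H s < w' x :=
        hHcont.continuousAt (gt_mem_nhds hgt)
      obtain ⟨δ, hδ, hball⟩ := Metric.eventually_nhds_iff.1 hev
      obtain ⟨q, hq1, hq2⟩ := exists_rat_btwn (lt_add_of_pos_right (ulim' x) hδ)
      have hdist : dist (q : ℝ) (ulim' x) < δ := by
        rw [Real.dist_eq, abs_lt]; constructor <;> linarith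
      have h6 : H q < w' x := hball hdist
      have h7 := hx.1 q h6
      linarith
  filter_upwards [hmain, haeW, haeUl] with x h1 h2 h3
  rw [h2, h1, h3]
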